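/- Let B₂ be a Boolean algebra, let B₀ ⊆ B₁ ⊆ B₂ be Boolean subalgebras, let I₂ be an ideal of B₂, and set I₁ = I₂ ∩ B₁ (an ideal of B₁). Suppose J₀ ⊆ B₁ is independent from B₀ modulo I₁ in B₁, and J₁ ⊆ B₂ is independent from B₁ modulo I₂ in B₂. Then J₀ ∪ J₁ is independent from B₀ modulo I₂ in B₂. -/
import Mathlib


/-- A subset of a Boolean algebra closed under the Boolean operations and containing `⊥`
and `⊤`. -/
def IsBooleanSubalgebra {B : Type*} [BooleanAlgebra B] (S : Set B) : Prop :=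
  ⊥ ∈ S ∧ ⊤ ∈ S ∧ (∀ a ∈ S, ∀ b ∈ S, a ⊓ b ∈ S) ∧ (∀ a ∈ S, ∀ b ∈ S, a ⊔ b ∈ S) ∧
    ∀ a ∈ S, aᶜ ∈ S

/-- The Boolean subalgebra of `B` generated by a subset `X`. -/
def genBA {B : Type*} [BooleanAlgebra B] (X : Set B) : Set B :=
  ⋂₀ {S : Set B | IsBooleanSubalgebra S ∧ X ⊆ S}

/-- An ideal of a Boolean algebra: a nonempty subset that is downward closed and closed
under binary joins. -/
def IsIdeal {B : Type*} [BooleanAlgebra B] (I : Set B) : Prop :=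
  I.Nonempty ∧ (∀ a b : B, a ≤ b → b ∈ I → a ∈ I) ∧ ∀ a ∈ I, ∀ b ∈ I, a ⊔ b ∈ I

/-- `Y` is independent from `X` modulo `I` in the Boolean algebra `B` : for all finite
disjoint subsets `F₁, F₂` of `Y` and every element `a` of the Boolean subalgebra generated
by `X` with `a ∉ I`, the element `(⨅ y ∈ F₁, y) ⊓ (⨅ y ∈ F₂, yᶜ) ⊓ a` is not in `I`. -/
def IndepFrom {B : Type*} [BooleanAlgebra B] (Y X I : Set B) : Prop :=
  ∀ F₁ F₂ : Finset B, ↑F₁ ⊆ Y → ↑F₂ ⊆ Y → Disjoint F₁ F₂ →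
    ∀ a ∈ genBA X, a ∉ I → (F₁.inf id ⊓ F₂.inf (fun y => yᶜ) ⊓ a) ∉ I

lemma genBA_subset {B : Type*} [BooleanAlgebra B] {X S : Set B}
    (hS : IsBooleanSubalgebra S) (hXS : X ⊆ S) : genBA X ⊆ S :=
  Set.sInter_subset_of_mem ⟨hS, hXS⟩

lemma subset_genBA {B : Type*} [BooleanAlgebra B] (X : Set B) : X ⊆ genBA X :=
  fun x hx => Set.mem_sInter.2 fun _ hS => hS.2 hx

lemma inf_mem_subalg {B : Type*} [BooleanAlgebra B] {S : Set B}
    (hS : IsBooleanSubalgebra S) (f : B → B) (F : Finset B)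
    (hF : ∀ y ∈ F, f y ∈ S) : F.inf f ∈ S := by
  classical
  induction F using Finset.cons_induction with
  | empty => simpa using hS.2.1
  | cons x F hx ih =>
    rw [Finset.inf_cons]
    exact hS.2.2.1 _ (hF x (Finset.mem_cons_self _ _)) _
      (ih fun y hy => hF y (Finset.mem_cons_of_mem hy))

/-- Two-step transitivity of independence: if `J₀ ⊆ B₁` is independent from the subalgebra
`B₀` modulo `I₂ ∩ B₁`, and `J₁` is independent from `B₁` modulo `I₂`, then `J₀ ∪ J₁` is
independent from `B₀` modulo `I₂`. -/
theorem indepFrom_union_trans {B₂ : Type*} [BooleanAlgebra B₂]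
    (B0 B1 : Set B₂) (hB0 : IsBooleanSubalgebra B0) (hB1 : IsBooleanSubalgebra B1)
    (hB01 : B0 ⊆ B1)
    (I₂ : Set B₂) (hI₂ : IsIdeal I₂)
    (J₀ J₁ : Set B₂) (hJ₀ : J₀ ⊆ B1)
    (hind₀ : IndepFrom J₀ B0 (I₂ ∩ B1))
    (hind₁ : IndepFrom J₁ B1 I₂) :
    IndepFrom (J₀ ∪ J₁) B0 I₂ := by
  classical
  intro F₁ F₂ hF₁ hF₂ hdisj a ha haI
  set G₁ := F₁.filter (· ∈ J₀) with hG₁def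
  set H₁ := F₁.filter (· ∉ J₀) with hH₁def
  set G₂ := F₂.filter (· ∈ J₀) with hG₂def
  set H₂ := F₂.filter (· ∉ J₀) with hH₂def
  have hG₁J : ↑G₁ ⊆ J₀ := fun y hy => (Finset.mem_filter.1 hy).2
  have hG₂J : ↑G₂ ⊆ J₀ := fun y hy => (Finset.mem_filter.1 hy).2
  have hH₁J : ↑H₁ ⊆ J₁ := by
    intro y hy
    have := Finset.mem_filter.1 hy
    rcases hF₁ this.1 with h | h
    · exact absurd h this.2
    · exact h
  have hH₂J : ↑H₂ ⊆ J₁ := by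
    intro y hy
    have := Finset.mem_filter.1 hy
    rcases hF₂ this.1 with h | h
    · exact absurd h this.2
    · exact h
  -- a is in B1
  have haB1 : a ∈ B1 := genBA_subset hB1 hB01 ha
  set b := G₁.inf id ⊓ G₂.inf (fun y => yᶜ) ⊓ a with hbdef
  have hbB1 : b ∈ B1 := by
    apply hB1.2.2.1
    · apply hB1.2.2.1
      · exact inf_mem_subalg hB1 id G₁ fun y hy => hJ₀ (hG₁J hy)
      · exact inf_mem_subalg hB1 _ G₂ fun y hy => hB1.2.2.2.2 _ (hJ₀ (hG₂J hy))
    · exact haB1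
  have hbI : b ∉ I₂ := by
    have := hind₀ G₁ G₂ hG₁J hG₂J
      (hdisj.mono (Finset.filter_subset _ _) (Finset.filter_subset _ _)) a ha
      (fun h => haI h.1)
    intro h
    exact this ⟨h, hbB1⟩
  have key := hind₁ H₁ H₂ hH₁J hH₂J
    (hdisj.mono (Finset.filter_subset _ _) (Finset.filter_subset _ _)) b
    (subset_genBA B1 hbB1) hbI
  have e₁ : F₁.inf id = G₁.inf id ⊓ H₁.inf id := by
    rw [← Finset.inf_union, Finset.filter_union_filter_not_eq]
  have e₂ : F₂.inf (fun y => yᶜ) = G₂.inf (fun y => yᶜ) ⊓ H₂.inf (fun y => yᶜ) := by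
    rw [← Finset.inf_union, Finset.filter_union_filter_not_eq]
  have heq : F₁.inf id ⊓ F₂.inf (fun y => yᶜ) ⊓ a
      = H₁.inf id ⊓ H₂.inf (fun y => yᶜ) ⊓ b := by
    rw [e₁, e₂, hbdef]
    ac_rfl
  rw [heq]
  exact key
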